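/- Let b be a behavior with a sequential witness μ, let d be a dequeue event and e an enqueue event of b with μ(d)=e, and let b' be the behavior obtained by removing both d and e from b. Then the restriction of μ to the dequeue events of b' is a sequential witness for b'. -/

import Mathlib

inductive QAction : Type
  | enq : ℕ → QAction
  | deq : Option ℕ → QAction
  deriving DecidableEq

structure QEvent : Type where
  uid : ℕ
  act : QAction
  deriving DecidableEq

def QEvent.isEnq : QEvent → Bool
  | ⟨_, QAction.enq _⟩ => true
  | _ => false

def QEvent.isDeq : QEvent → Bool
  | ⟨_, QAction.deq _⟩ => true
  | _ => false

abbrev Behavior := List QEvent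

/-- One step of the queue LTS. -/
inductive QStep : List ℕ → QAction → List ℕ → Prop
  | enq (q : List ℕ) (x : ℕ) : QStep q (QAction.enq x) (q ++ [x])
  | deq (x : ℕ) (q : List ℕ) : QStep (x :: q) (QAction.deq (some x)) q
  | deqNull : QStep [] (QAction.deq none) []

/-- A behavior is the trace of a run of the queue LTS from the given state. -/
inductive LegalFrom : List ℕ → Behavior → Prop
  | nil (q : List ℕ) : LegalFrom q []
  | cons {q q' : List ℕ} {a : QAction} {rest : Behavior} (u : ℕ) :
      QStep q a q' → LegalFrom q' rest → LegalFrom q (⟨u, a⟩ :: rest)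

/-- A behavior is legal if it is the trace of a run of the queue LTS from ε. -/
def Legal (b : Behavior) : Prop := LegalFrom [] b

/-- `e` occurs strictly before `e'` in `b`. -/
def Precedes (b : Behavior) (e e' : QEvent) : Prop :=
  ∃ i j : ℕ, i < j ∧ b[i]? = some e ∧ b[j]? = some e'

/-- Observational equivalence: same subsequence of enqueue events and of dequeue events. -/
def ObsEquiv (b1 b2 : Behavior) : Prop :=
  b1.filter QEvent.isEnq = b2.filter QEvent.isEnq ∧
  b1.filter QEvent.isDeq = b2.filter QEvent.isDeq

/-- Sequences consisting only of enqueue events. -/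
inductive EnqStar : Behavior → Prop
  | nil : EnqStar []
  | cons (u x : ℕ) {rest : Behavior} : EnqStar rest → EnqStar (⟨u, QAction.enq x⟩ :: rest)

/-- Canonical behaviors: the language ((deq NULL)* · enq(x)·deq(x))* · (deq NULL)* · (enq(x))*. -/
inductive Canonical : Behavior → Prop
  | tail {rest : Behavior} : EnqStar rest → Canonical rest
  | deqNull (u : ℕ) {rest : Behavior} :
      Canonical rest → Canonical (⟨u, QAction.deq none⟩ :: rest)
  | pair (u v x : ℕ) {rest : Behavior} :
      Canonical rest → Canonical (⟨u, QAction.enq x⟩ :: ⟨v, QAction.deq (some x)⟩ :: rest)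

/-- `e` enqueues the same (non-NULL) value that `d` dequeues. -/
def SameVal (e d : QEvent) : Prop :=
  ∃ x, e.act = QAction.enq x ∧ d.act = QAction.deq (some x)

/-- A sequential witness for a behavior `b`. -/
structure SeqWitness (b : Behavior) (μ : QEvent → Option QEvent) : Prop where
  codom : ∀ d ∈ b, d.isDeq = true → ∀ e, μ d = some e → e ∈ b ∧ e.isEnq = true
  val : ∀ d ∈ b, d.isDeq = true → ∀ e, μ d = some e → SameVal e d
  null : ∀ d ∈ b, d.isDeq = true → (μ d = none ↔ d.act = QAction.deq none)
  inj : ∀ d ∈ b, ∀ d' ∈ b, d.isDeq = true → d'.isDeq = true →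
        ∀ e, μ d = some e → μ d' = some e → d = d'
  order : ∀ d ∈ b, d.isDeq = true → ∀ e, μ d = some e → Precedes b e d
  fifo : ∀ e ∈ b, e.isEnq = true → ∀ d' ∈ b, d'.isDeq = true → ∀ e',
         μ d' = some e' → Precedes b e e' →
         ∃ d ∈ b, d.isDeq = true ∧ μ d = some e ∧ Precedes b d d'
  empty : ∀ d ∈ b, d.isDeq = true → μ d = none →
          {e : QEvent | e ∈ b ∧ e.isEnq = true ∧ Precedes b e d}.ncard =
          {d' : QEvent | d' ∈ b ∧ d'.isDeq = true ∧ Precedes b d' d ∧ μ d' ≠ none}.ncard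

lemma not_enq_deq {x : QEvent} (h1 : x.isEnq = true) (h2 : x.isDeq = true) : False := by
  rcases x with ⟨u, a⟩; cases a <;> simp [QEvent.isEnq, QEvent.isDeq] at h1 h2

lemma precedes_iff_indexOf {l : Behavior} (hnd : l.Nodup) (x y : QEvent) :
    Precedes l x y ↔ x ∈ l ∧ y ∈ l ∧ l.idxOf x < l.idxOf y := by
  constructor
  · rintro ⟨i, j, hij, hx, hy⟩
    rw [List.getElem?_eq_some_iff] at hx hy
    obtain ⟨hi, hx⟩ := hx; obtain ⟨hj, hy⟩ := hy
    have hxm : x ∈ l := hx ▸ List.getElem_mem hi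
    have hym : y ∈ l := hy ▸ List.getElem_mem hj
    have hix : l.idxOf x = i := by
      have h1 : List.idxOf x l < l.length := List.idxOf_lt_length_iff.2 hxm
      have := List.getElem_idxOf h1
      have := (hnd.getElem_inj_iff (hi := h1) (hj := hi)).1 (by rw [this, hx])
      exact this
    have hiy : l.idxOf y = j := by
      have h1 : List.idxOf y l < l.length := List.idxOf_lt_length_iff.2 hym
      have := List.getElem_idxOf h1
      have := (hnd.getElem_inj_iff (hi := h1) (hj := hj)).1 (by rw [this, hy])
      exact this
    exact ⟨hxm, hym, by omega⟩
  · rintro ⟨hx, hy, hlt⟩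
    refine ⟨l.idxOf x, l.idxOf y, hlt, ?_, ?_⟩
    · rw [List.getElem?_eq_some_iff]
      exact ⟨List.idxOf_lt_length_iff.2 hx, List.getElem_idxOf _⟩
    · rw [List.getElem?_eq_some_iff]
      exact ⟨List.idxOf_lt_length_iff.2 hy, List.getElem_idxOf _⟩

lemma precedes_trans {l : Behavior} (hnd : l.Nodup) {x y z : QEvent}
    (h1 : Precedes l x y) (h2 : Precedes l y z) : Precedes l x z := by
  rw [precedes_iff_indexOf hnd] at *
  exact ⟨h1.1, h2.2.1, lt_trans h1.2.2 h2.2.2⟩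

lemma precedes_of_sublist {l' l : Behavior} (hs : List.Sublist l' l) {x y : QEvent}
    (h : Precedes l' x y) : Precedes l x y := by
  obtain ⟨f, hf⟩ := List.sublist_iff_exists_orderEmbedding_getElem?_eq.1 hs
  obtain ⟨i, j, hij, hx, hy⟩ := h
  refine ⟨f i, f j, f.lt_iff_lt.2 hij, ?_, ?_⟩
  · rw [← hf i]; exact hx
  · rw [← hf j]; exact hy

lemma precedes_restrict {l' l : Behavior} (hs : List.Sublist l' l) (hnd : l.Nodup) {x y : QEvent}
    (hx : x ∈ l') (hy : y ∈ l') (h : Precedes l x y) : Precedes l' x y := by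
  obtain ⟨f, hf⟩ := List.sublist_iff_exists_orderEmbedding_getElem?_eq.1 hs
  obtain ⟨i', hx'⟩ := List.getElem?_of_mem hx
  obtain ⟨j', hy'⟩ := List.getElem?_of_mem hy
  obtain ⟨i, j, hij, hxl, hyl⟩ := h
  have hxi : l[f i']? = some x := by
    rw [← hf i']; exact hx'
  have hyj : l[f j']? = some y := by
    rw [← hf j']; exact hy'
  -- uniqueness of indices in nodup list
  have hu : ∀ {a : QEvent} {i j : ℕ}, l[i]? = some a → l[j]? = some a → i = j := by
    intro a i j h1 h2
    rw [List.getElem?_eq_some_iff] at h1 h2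
    obtain ⟨hi, h1⟩ := h1; obtain ⟨hj, h2⟩ := h2
    exact (hnd.getElem_inj_iff (hi := hi) (hj := hj)).1 (by rw [h1, h2])
  have e1 : f i' = i := hu hxi hxl
  have e2 : f j' = j := hu hyj hyl
  exact ⟨i', j', f.lt_iff_lt.1 (by omega), hx', hy'⟩

/-- Removing a matched dequeue/enqueue pair preserves the sequential witness
(restricted to the remaining dequeues). -/
theorem seqWitness_remove_pair (b : Behavior) (μ : QEvent → Option QEvent)
    (hnd : b.Nodup) (hw : SeqWitness b μ) (d e : QEvent)
    (hd : d ∈ b) (hdq : d.isDeq = true) (he : e ∈ b) (heq : e.isEnq = true)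
    (hμ : μ d = some e) :
    SeqWitness ((b.erase d).erase e) μ := by
  set b' : Behavior := (b.erase d).erase e with hb'
  have hs : List.Sublist b' b := List.erase_sublist.trans List.erase_sublist
  have hnd1 : (b.erase d).Nodup := hnd.erase d
  have hmem : ∀ x : QEvent, x ∈ b' ↔ x ∈ b ∧ x ≠ d ∧ x ≠ e := by
    intro x
    rw [hb', hnd1.mem_erase_iff, hnd.mem_erase_iff]
    tauto
  have hde : d ≠ e := fun h => not_enq_deq heq (h ▸ hdq)
  -- key: for a null dequeue d', e ≺ d' → d ≺ d'
  have key : ∀ d' ∈ b, d'.isDeq = true → μ d' = none → Precedes b e d' → Precedes b d d' := by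
    intro d' hd' hdq' hnull hpe
    set E : Set QEvent := {x | x ∈ b ∧ x.isEnq = true ∧ Precedes b x d'} with hE
    set D : Set QEvent := {x | x ∈ b ∧ x.isDeq = true ∧ Precedes b x d' ∧ μ x ≠ none} with hD
    have hEfin : E.Finite := (b.finite_toSet).subset (fun x hx => hx.1)
    have hDfin : D.Finite := (b.finite_toSet).subset (fun x hx => hx.1)
    set f : QEvent → QEvent := fun x => (μ x).getD x with hf
    have himg : f '' D ⊆ E := by
      rintro _ ⟨x, ⟨hxb, hxdq, hxp, hxnn⟩, rfl⟩
      obtain ⟨ex, hex⟩ := Option.ne_none_iff_exists'.1 hxnn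
      have hco := hw.codom x hxb hxdq ex hex
      have hor := hw.order x hxb hxdq ex hex
      simp only [hf, hex, Option.getD_some]
      exact ⟨hco.1, hco.2, precedes_trans hnd hor hxp⟩
    have hinj : Set.InjOn f D := by
      rintro x ⟨hxb, hxdq, _, hxnn⟩ y ⟨hyb, hydq, _, hynn⟩ hxy
      obtain ⟨ex, hex⟩ := Option.ne_none_iff_exists'.1 hxnn
      obtain ⟨ey, hey⟩ := Option.ne_none_iff_exists'.1 hynn
      simp only [hf, hex, hey, Option.getD_some] at hxy
      exact hw.inj x hxb y hyb hxdq hydq ex hex (hxy ▸ hey)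
    have hcard : E.ncard = D.ncard := hw.empty d' hd' hdq' hnull
    have heq2 : f '' D = E := by
      apply Set.eq_of_subset_of_ncard_le himg _ hEfin
      rw [Set.ncard_image_of_injOn hinj, hcard]
    have heE : e ∈ E := ⟨he, heq, hpe⟩
    rw [← heq2] at heE
    obtain ⟨x, hxD, hfx⟩ := heE
    obtain ⟨ex, hex⟩ := Option.ne_none_iff_exists'.1 hxD.2.2.2
    simp only [hf, hex, Option.getD_some] at hfx
    have : x = d := hw.inj x hxD.1 d hd hxD.2.1 hdq e (hfx ▸ hex) hμ
    exact this ▸ hxD.2.2.1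
  constructor
  · intro d₁ hd₁ hdq₁ e₁ hμ₁
    have hd₁b := (hmem d₁).1 hd₁
    have hco := hw.codom d₁ hd₁b.1 hdq₁ e₁ hμ₁
    refine ⟨(hmem e₁).2 ⟨hco.1, fun h => not_enq_deq hco.2 (h ▸ hdq), fun h => ?_⟩, hco.2⟩
    exact hd₁b.2.1 (hw.inj d₁ hd₁b.1 d hd hdq₁ hdq e₁ hμ₁ (h ▸ hμ))
  · intro d₁ hd₁ hdq₁ e₁ hμ₁
    exact hw.val d₁ ((hmem d₁).1 hd₁).1 hdq₁ e₁ hμ₁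
  · intro d₁ hd₁ hdq₁
    exact hw.null d₁ ((hmem d₁).1 hd₁).1 hdq₁
  · intro d₁ hd₁ d₂ hd₂ h1 h2 e₁ hμ₁ hμ₂
    exact hw.inj d₁ ((hmem d₁).1 hd₁).1 d₂ ((hmem d₂).1 hd₂).1 h1 h2 e₁ hμ₁ hμ₂
  · intro d₁ hd₁ hdq₁ e₁ hμ₁
    have hd₁b := (hmem d₁).1 hd₁
    have hco := hw.codom d₁ hd₁b.1 hdq₁ e₁ hμ₁
    have he₁ : e₁ ∈ b' := by
      refine (hmem e₁).2 ⟨hco.1, fun h => not_enq_deq hco.2 (h ▸ hdq), fun h => ?_⟩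
      exact hd₁b.2.1 (hw.inj d₁ hd₁b.1 d hd hdq₁ hdq e₁ hμ₁ (h ▸ hμ))
    exact precedes_restrict hs hnd he₁ hd₁ (hw.order d₁ hd₁b.1 hdq₁ e₁ hμ₁)
  · intro e₀ he₀ heq₀ d₁ hd₁ hdq₁ e₁ hμ₁ hp
    have he₀b := (hmem e₀).1 he₀
    have hd₁b := (hmem d₁).1 hd₁
    obtain ⟨d₀, hd₀b, hd₀q, hμ₀, hp₀⟩ :=
      hw.fifo e₀ he₀b.1 heq₀ d₁ hd₁b.1 hdq₁ e₁ hμ₁ (precedes_of_sublist hs hp)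
    have hd₀' : d₀ ∈ b' := by
      refine (hmem d₀).2 ⟨hd₀b, fun h => ?_, fun h => not_enq_deq heq (h ▸ hd₀q)⟩
      subst h
      rw [hμ] at hμ₀
      exact he₀b.2.2 (Option.some_injective _ hμ₀).symm
    exact ⟨d₀, hd₀', hd₀q, hμ₀, precedes_restrict hs hnd hd₀' hd₁ hp₀⟩
  · intro d₁ hd₁ hdq₁ hnull
    have hd₁b := (hmem d₁).1 hd₁
    set E : Set QEvent := {x | x ∈ b ∧ x.isEnq = true ∧ Precedes b x d₁} with hE
    set D : Set QEvent := {x | x ∈ b ∧ x.isDeq = true ∧ Precedes b x d₁ ∧ μ x ≠ none} with hD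
    have hEfin : E.Finite := (b.finite_toSet).subset (fun x hx => hx.1)
    have hDfin : D.Finite := (b.finite_toSet).subset (fun x hx => hx.1)
    have hE' : {x : QEvent | x ∈ b' ∧ x.isEnq = true ∧ Precedes b' x d₁} = E \ {e} := by
      ext x
      simp only [Set.mem_setOf_eq, Set.mem_diff, Set.mem_singleton_iff, hE]
      constructor
      · rintro ⟨hxb', hxe, hxp⟩
        have := (hmem x).1 hxb'
        exact ⟨⟨this.1, hxe, precedes_of_sublist hs hxp⟩, this.2.2⟩
      · rintro ⟨⟨hxb, hxe, hxp⟩, hxne⟩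
        have hx' : x ∈ b' := (hmem x).2 ⟨hxb, fun h => not_enq_deq hxe (h ▸ hdq), hxne⟩
        exact ⟨hx', hxe, precedes_restrict hs hnd hx' hd₁ hxp⟩
    have hD' : {x : QEvent | x ∈ b' ∧ x.isDeq = true ∧ Precedes b' x d₁ ∧ μ x ≠ none}
        = D \ {d} := by
      ext x
      simp only [Set.mem_setOf_eq, Set.mem_diff, Set.mem_singleton_iff, hD]
      constructor
      · rintro ⟨hxb', hxdq, hxp, hxn⟩
        have := (hmem x).1 hxb'
        exact ⟨⟨this.1, hxdq, precedes_of_sublist hs hxp, hxn⟩, this.2.1⟩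
      · rintro ⟨⟨hxb, hxdq, hxp, hxn⟩, hxne⟩
        have hx' : x ∈ b' := (hmem x).2 ⟨hxb, hxne, fun h => not_enq_deq heq (h ▸ hxdq)⟩
        exact ⟨hx', hxdq, precedes_restrict hs hnd hx' hd₁ hxp, hxn⟩
    rw [hE', hD']
    have hcard : E.ncard = D.ncard := hw.empty d₁ hd₁b.1 hdq₁ hnull
    by_cases hpe : Precedes b e d₁
    · have hpd : Precedes b d d₁ := key d₁ hd₁b.1 hdq₁ hnull hpe
      have heE : e ∈ E := ⟨he, heq, hpe⟩
      have hdD : d ∈ D := ⟨hd, hdq, hpd, by rw [hμ]; exact Option.some_ne_none _⟩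
      rw [Set.ncard_diff_singleton_of_mem heE,
        Set.ncard_diff_singleton_of_mem hdD, hcard]
    · have hpd : ¬ Precedes b d d₁ := fun h => hpe
        (precedes_trans hnd (hw.order d hd hdq e hμ) h)
      have heE : e ∉ E := fun h => hpe h.2.2
      have hdD : d ∉ D := fun h => hpd h.2.2.1
      rw [Set.diff_singleton_eq_self heE, Set.diff_singleton_eq_self hdD, hcard]
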